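/- Let C = [[A, D],[D, −A]] be a symmetric 2k×2k conference matrix (zero diagonal, ±1 off-diagonal, C² = (2k−1)I) with A, D symmetric commuting k×k matrices and D invertible. Then A² + D² = (2k−1)I and the matrices I + (1/α)A and I − (1/α)A, where α = √(2k−1), are positive definite. -/

import Mathlib

open Matrix

/-- For a conference matrix C=[[A,D],[D,-A]] with D invertible one has
A²+D²=(2k-1)I and I±(1/α)A positive definite, α=√(2k-1). -/
theorem stmt12 (k : ℕ) (hk : 1 ≤ k)
    (A D : Matrix (Fin k) (Fin k) ℝ) (hA : A.IsSymm) (hD : D.IsSymm)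
    (hAD : A * D = D * A) (hDunit : IsUnit D.det)
    (C : Matrix (Fin k ⊕ Fin k) (Fin k ⊕ Fin k) ℝ)
    (hC : C = Matrix.fromBlocks A D D (-A))
    (hdiag : ∀ i, C i i = 0)
    (hoff : ∀ i j, i ≠ j → C i j = 1 ∨ C i j = -1)
    (hC2 : C * C = ((2 * (k : ℝ) - 1)) • 1) :
    A ^ 2 + D ^ 2 = ((2 * (k : ℝ) - 1)) • 1 ∧
      (1 + (Real.sqrt (2 * (k : ℝ) - 1))⁻¹ • A).PosDef ∧
      (1 - (Real.sqrt (2 * (k : ℝ) - 1))⁻¹ • A).PosDef := by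
  set c : ℝ := 2 * (k : ℝ) - 1 with hc
  have hk1 : (1 : ℝ) ≤ (k : ℝ) := by exact_mod_cast hk
  have hcpos : 0 < c := by simp only [hc]; linarith
  set α : ℝ := Real.sqrt c with hα
  have hαpos : 0 < α := Real.sqrt_pos.mpr hcpos
  have hα2 : α * α = c := Real.mul_self_sqrt hcpos.le
  -- block computation
  subst hC
  rw [Matrix.fromBlocks_multiply] at hC2
  have hrhs : (c • (1 : Matrix (Fin k ⊕ Fin k) (Fin k ⊕ Fin k) ℝ)) =
      Matrix.fromBlocks (c • 1) 0 0 (c • 1) := by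
    rw [← Matrix.fromBlocks_one, Matrix.fromBlocks_smul, smul_zero]
  rw [hrhs] at hC2
  have hsum : A * A + D * D = c • 1 := by
    have := congrArg Matrix.toBlocks₁₁ hC2
    simpa [Matrix.toBlocks_fromBlocks₁₁] using this
  have h1 : A ^ 2 + D ^ 2 = c • 1 := by
    simpa [pow_two] using hsum
  have hnonneg : ∀ v : Fin k → ℝ, 0 ≤ dotProduct v v := fun v =>
    Finset.sum_nonneg fun i _ => mul_self_nonneg _
  have hpos : ∀ v : Fin k → ℝ, v ≠ 0 → 0 < dotProduct v v := fun v hv =>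
    lt_of_le_of_ne (hnonneg v) (fun h => hv (dotProduct_self_eq_zero.mp h.symm))
  -- key quadratic inequality
  have key : ∀ x : Fin k → ℝ, x ≠ 0 →
      |dotProduct x (A *ᵥ x)| < α * dotProduct x x := by
    intro x hx
    have hxx : 0 < dotProduct x x := hpos x hx
    set n : ℝ := dotProduct x x with hn
    set q : ℝ := dotProduct x (A *ᵥ x) with hq
    have hcs : q ^ 2 ≤ n * dotProduct (A *ᵥ x) (A *ᵥ x) := by
      have := Finset.sum_mul_sq_le_sq_mul_sq Finset.univ x (A *ᵥ x)
      rw [hq, hn]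
      simpa [dotProduct, pow_two] using this
    have hAAx : dotProduct (A *ᵥ x) (A *ᵥ x) = dotProduct x ((A * A) *ᵥ x) := by
      rw [← Matrix.mulVec_mulVec, Matrix.dotProduct_mulVec x A, ← Matrix.mulVec_transpose, hA]
    have hDx : D *ᵥ x ≠ 0 := by
      intro h0
      apply hx
      have h' : (D⁻¹ * D) *ᵥ x = D⁻¹ *ᵥ (D *ᵥ x) := (Matrix.mulVec_mulVec _ _ _).symm
      rwa [Matrix.nonsing_inv_mul D hDunit, Matrix.one_mulVec, h0, Matrix.mulVec_zero] at h'
    have hDDx : 0 < dotProduct (D *ᵥ x) (D *ᵥ x) := hpos _ hDx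
    have hDDx' : dotProduct (D *ᵥ x) (D *ᵥ x) = dotProduct x ((D * D) *ᵥ x) := by
      rw [← Matrix.mulVec_mulVec, Matrix.dotProduct_mulVec x D, ← Matrix.mulVec_transpose, hD]
    have hAA : dotProduct x ((A * A) *ᵥ x) = c * n - dotProduct x ((D * D) *ᵥ x) := by
      have h' : dotProduct x (((A * A) + (D * D)) *ᵥ x) = c * n := by
        rw [hsum, Matrix.smul_mulVec, Matrix.one_mulVec, dotProduct_smul]
        simp [hn, smul_eq_mul]
      rw [Matrix.add_mulVec, dotProduct_add] at h'
      linarith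
    have hkey : q ^ 2 < (α * n) ^ 2 := by
      have h2 : dotProduct (A *ᵥ x) (A *ᵥ x) < c * n := by
        rw [hAAx, hAA]
        rw [hDDx'] at hDDx
        linarith
      calc q ^ 2 ≤ n * dotProduct (A *ᵥ x) (A *ᵥ x) := hcs
        _ < n * (c * n) := (mul_lt_mul_iff_right₀ hxx).mpr h2
        _ = (α * n) ^ 2 := by rw [← hα2]; ring
    exact abs_lt_of_sq_lt_sq hkey (by positivity)
  have hsymm : (α⁻¹ • A)ᴴ = α⁻¹ • A := by
    rw [show (α⁻¹ • A)ᴴ = (α⁻¹ • A)ᵀ from rfl, Matrix.transpose_smul, hA]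
  have hαinv : 0 < α⁻¹ := inv_pos.mpr hαpos
  refine ⟨h1, Matrix.posDef_iff_dotProduct_mulVec.mpr ⟨?_, ?_⟩, Matrix.posDef_iff_dotProduct_mulVec.mpr ⟨?_, ?_⟩⟩
  · show (1 + α⁻¹ • A)ᴴ = _
    rw [Matrix.conjTranspose_add, Matrix.conjTranspose_one, hsymm]
  · intro x hx
    have hxx : 0 < dotProduct x x := hpos x hx
    have habs := (abs_lt.mp (key x hx)).1
    have hst : star x = x := by funext i; simp
    rw [hst, Matrix.add_mulVec, dotProduct_add, Matrix.one_mulVec,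
      Matrix.smul_mulVec, dotProduct_smul, smul_eq_mul]
    have h' : α⁻¹ * (-(α * dotProduct x x)) < α⁻¹ * dotProduct x (A *ᵥ x) :=
      mul_lt_mul_of_pos_left habs hαinv
    have h'' : α⁻¹ * (-(α * dotProduct x x)) = -(dotProduct x x) := by
      field_simp
    linarith
  · show (1 - α⁻¹ • A)ᴴ = _
    rw [Matrix.conjTranspose_sub, Matrix.conjTranspose_one, hsymm]
  · intro x hx
    have hxx : 0 < dotProduct x x := hpos x hx
    have habs := (abs_lt.mp (key x hx)).2
    have hst : star x = x := by funext i; simp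
    rw [hst, Matrix.sub_mulVec, dotProduct_sub, Matrix.one_mulVec,
      Matrix.smul_mulVec, dotProduct_smul, smul_eq_mul]
    have h' : α⁻¹ * dotProduct x (A *ᵥ x) < α⁻¹ * (α * dotProduct x x) :=
      mul_lt_mul_of_pos_left habs hαinv
    have h'' : α⁻¹ * (α * dotProduct x x) = dotProduct x x := by
      field_simp
    linarith
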